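/- Let p ≥ 5 be a prime such that p = q⁶ + q³ + 1 for some natural number q. Then the sequence with general term ⌊n^((p-1)/3)/p⌋ is eventually prime-free; that is, there exists a natural number N such that for all n ≥ N, ⌊n^((p-1)/3)/p⌋ is not prime. -/
import Mathlib

lemma aux_not_prime (a b : ℕ) (ha : 2 ≤ a) (hb : 2 ≤ b) : ¬ Nat.Prime (a * b) := by
  intro h
  rcases Nat.prime_mul_iff.mp h with ⟨_, h1⟩ | ⟨_, h1⟩ <;> omega

theorem stmt12 (p q : ℕ) (hp : Nat.Prime p) (hp5 : 5 ≤ p) (hq : p = q ^ 6 + q ^ 3 + 1) :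
    ∃ N : ℕ, ∀ n : ℕ, N ≤ n → ¬ Nat.Prime (n ^ ((p - 1) / 3) / p) := by
  haveI : Fact p.Prime := ⟨hp⟩
  -- q ≥ 2
  have hq2 : 2 ≤ q := by
    by_contra h
    push_neg at h
    interval_cases q <;> simp_all
  have hq3' : 8 ≤ q ^ 3 := by
    have := Nat.pow_le_pow_left hq2 3; norm_num at this; exact this
  have hq6' : 64 ≤ q ^ 6 := by
    have := Nat.pow_le_pow_left hq2 6; norm_num at this; exact this
  have hq26 : q ^ 2 ≤ q ^ 6 := Nat.pow_le_pow_right (by omega) (by omega)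
  have hq6p : q ^ 6 < p := by rw [hq]; linarith
  have hp73 : 73 ≤ p := by rw [hq]; linarith
  -- q % 3 ≠ 1
  have h3q : q % 3 ≠ 1 := by
    intro h
    have h6 : q ^ 6 % 3 = 1 := by rw [Nat.pow_mod, h]
    have h3 : q ^ 3 % 3 = 1 := by rw [Nat.pow_mod, h]
    have key : ∀ A B : ℕ, A % 3 = 1 → B % 3 = 1 → 3 ∣ A + B + 1 := by
      intro A B h1 h2; omega
    have h3p : 3 ∣ p := by rw [hq]; exact key _ _ h6 h3
    rcases (Nat.Prime.eq_one_or_self_of_dvd hp 3 h3p) with h' | h' <;> omega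
  -- 9 ∣ q^6 + q^3
  have h9 : 9 ∣ q ^ 6 + q ^ 3 := by
    have h6 : q ^ 6 % 9 = (q % 9) ^ 6 % 9 := Nat.pow_mod q 6 9
    have h3 : q ^ 3 % 9 = (q % 9) ^ 3 % 9 := Nat.pow_mod q 3 9
    have hqq : q % 3 = q % 9 % 3 := (Nat.mod_mod_of_dvd q (by norm_num)).symm
    have h99 : q % 9 < 9 := Nat.mod_lt _ (by norm_num)
    have key : ∀ A B : ℕ, A % 9 + B % 9 = 9 → 9 ∣ A + B := by intro A B h; omega
    have key0 : ∀ A B : ℕ, A % 9 = 0 → B % 9 = 0 → 9 ∣ A + B := by intro A B h1 h2; omega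
    obtain ⟨r, hr9, hrq⟩ : ∃ r, r < 9 ∧ q % 9 = r := ⟨q % 9, h99, rfl⟩
    rw [hrq] at h6 h3 hqq
    interval_cases r <;> norm_num at h6 h3 hqq <;> omega
  obtain ⟨k, hk⟩ := h9
  have hp1 : p = 9 * k + 1 := by rw [hq, hk]
  have hk8 : 8 ≤ k := by
    have : 72 ≤ 9 * k := by rw [← hk]; linarith
    omega
  refine ⟨3 * p, fun n hn => ?_⟩
  have he : (p - 1) / 3 = 3 * k := by omega
  rw [he]
  by_cases hpn : p ∣ n
  · -- p divides n
    obtain ⟨t, ht⟩ := hpn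
    have ht3 : 3 ≤ t := by
      by_contra h
      push_neg at h
      interval_cases t <;> omega
    obtain ⟨j, hj⟩ : ∃ j, 3 * k = j + 1 := ⟨3 * k - 1, by omega⟩
    have hsplit : n ^ (3 * k) = p * (p ^ j * t ^ (j + 1)) := by
      rw [hj, ht]; ring
    rw [hsplit, Nat.mul_div_cancel_left _ hp.pos]
    apply aux_not_prime
    · calc 2 ≤ p := by omega
        _ ≤ p ^ j := Nat.le_self_pow (by omega) p
    · calc 2 ≤ t := by omega
        _ ≤ t ^ (j + 1) := Nat.le_self_pow (by omega) t
  · -- p does not divide n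
    have hn0 : (n : ZMod p) ≠ 0 := fun h =>
      hpn ((ZMod.natCast_eq_zero_iff n p).mp h)
    have hu3 : ((n : ZMod p) ^ (3 * k)) ^ 3 = 1 := by
      rw [← pow_mul, show 3 * k * 3 = p - 1 by omega]
      exact ZMod.pow_card_sub_one_eq_one hn0
    have hc : (q : ZMod p) ^ 6 + (q : ZMod p) ^ 3 + 1 = 0 := by
      have h : ((q ^ 6 + q ^ 3 + 1 : ℕ) : ZMod p) = 0 := by
        rw [← hq]; exact ZMod.natCast_self p
      push_cast at h
      exact h
    set u : ZMod p := (n : ZMod p) ^ (3 * k) with hu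
    have h0 : (u - 1) * ((u - (q : ZMod p) ^ 3) * (u - (q : ZMod p) ^ 6)) = 0 := by
      linear_combination hu3 + (-u ^ 2 + (q : ZMod p) ^ 3 * u - (q : ZMod p) ^ 3 + 1) * hc
    obtain ⟨d, hd1, hdq, hud⟩ : ∃ d : ℕ, 1 ≤ d ∧ d ≤ q ^ 2 ∧ u = ((d ^ 3 : ℕ) : ZMod p) := by
      have hq21 : 1 ≤ q ^ 2 := Nat.one_le_pow 2 q (by omega)
      have hqq2 : q ≤ q ^ 2 := by nlinarith
      rcases mul_eq_zero.mp h0 with h | h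
      · exact ⟨1, le_refl _, hq21, by push_cast; simpa using sub_eq_zero.mp h⟩
      · rcases mul_eq_zero.mp h with h' | h'
        · exact ⟨q, by omega, hqq2, by push_cast; exact sub_eq_zero.mp h'⟩
        · refine ⟨q ^ 2, hq21, le_refl _, ?_⟩
          push_cast
          rw [← pow_mul]
          norm_num
          exact sub_eq_zero.mp h'
    have hd3q : d ^ 3 ≤ q ^ 6 := by
      have := Nat.pow_le_pow_left hdq 3
      rwa [← pow_mul] at this
    have hd3p : d ^ 3 < p := lt_of_le_of_lt hd3q hq6p
    have hmod : n ^ (3 * k) % p = d ^ 3 := by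
      have h1 : ((n ^ (3 * k) : ℕ) : ZMod p) = ((d ^ 3 : ℕ) : ZMod p) := by
        push_cast
        push_cast at hud
        exact hud
      have h2 : n ^ (3 * k) % p = d ^ 3 % p := (ZMod.natCast_eq_natCast_iff _ _ _).mp h1
      rw [h2, Nat.mod_eq_of_lt hd3p]
    obtain ⟨m, hm⟩ : ∃ m, n ^ (3 * k) / p = m := ⟨_, rfl⟩
    rw [hm]
    have hdm : p * m + d ^ 3 = n ^ (3 * k) := by
      have := Nat.div_add_mod (n ^ (3 * k)) p
      rw [hmod, hm] at this
      exact this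
    obtain ⟨a, ha⟩ : ∃ a, n ^ k = a := ⟨_, rfl⟩
    have hna : n ≤ a := ha ▸ Nat.le_self_pow (by omega) n
    have hcube : n ^ (3 * k) = a ^ 3 := by rw [show 3 * k = k * 3 by ring, pow_mul, ha]
    have hdp : d ≤ p := by linarith
    have hda : d ≤ a := by linarith
    have hd3a : d ^ 3 ≤ a ^ 3 := Nat.pow_le_pow_left hda 3
    have hpm : p * m = a ^ 3 - d ^ 3 := by
      rw [hcube] at hdm
      omega
    have hfact : a ^ 3 - d ^ 3 = (a - d) * (a * a + (d * a + d * d)) := by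
      zify [hda, hd3a]
      ring
    have hdvd : p ∣ (a - d) * (a * a + (d * a + d * d)) := by
      rw [← hfact]
      exact ⟨m, hpm.symm⟩
    have haB : 2 * p ≤ a * a + (d * a + d * d) := by nlinarith
    rcases (Nat.Prime.dvd_mul hp).mp hdvd with hA | hB
    · obtain ⟨A', hA'⟩ := hA
      have hmAB : m = A' * (a * a + (d * a + d * d)) := by
        apply Nat.eq_of_mul_eq_mul_left hp.pos
        rw [hpm, hfact, hA', mul_assoc]
      rw [hmAB]
      apply aux_not_prime
      · have h2p : 2 * p ≤ a - d := by omega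
        rw [hA'] at h2p
        by_contra hcon
        push_neg at hcon
        interval_cases A' <;> omega
      · omega
    · obtain ⟨B', hB'⟩ := hB
      have hmAB : m = (a - d) * B' := by
        apply Nat.eq_of_mul_eq_mul_left hp.pos
        rw [hpm, hfact, hB']
        ring
      rw [hmAB]
      apply aux_not_prime
      · omega
      · have := haB
        rw [hB'] at this
        by_contra hcon
        push_neg at hcon
        interval_cases B' <;> omega
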